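/- (Three-bidder partial disclosure beats both extremes.) Let n = 3, v_i = 1 for all i, and let g be the product prior under which each r_i is independently 0 with probability 2/3 and 1 with probability 1/3. Define the product information structure x(r,s) = ∏_{i=1}^3 κ(r_i, s_i), where κ(0,0) = 1/4, κ(0,4/9) = 5/12, κ(1,4/9) = 1/3, and κ(1,0) = 0. Then x is a calibrated information structure for g with Rev(x) = 3/8; moreover, the full-disclosure structure x_F (where x_F(r,s) = g(r) if s = r and 0 otherwise) has Rev(x_F) = 7/27, the no-disclosure structure x_N (where x_N(r,s) = g(r) if s = (1/3,1/3,1/3) and 0 otherwise) has Rev(x_N) = 1/3, and 3/8 is strictly greater than both. -/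

import Mathlib

open scoped Classical

noncomputable section

/-- A finitely supported probability mass function on CTR vectors in [0,1]ⁿ. -/
def IsPriorN {n : ℕ} (g : (Fin n → ℝ) → ℝ) : Prop :=
  (Function.support g).Finite ∧ (∀ r, 0 ≤ g r) ∧
  (∀ r, g r ≠ 0 → ∀ i, 0 ≤ r i ∧ r i ≤ 1) ∧ (∑ᶠ r, g r) = 1

/-- An information structure for the prior `g`: finitely supported, nonnegative,
signals in [0,1]ⁿ, with `r`-marginal equal to `g`. -/
def IsInfoN {n : ℕ} (g : (Fin n → ℝ) → ℝ) (x : (Fin n → ℝ) × (Fin n → ℝ) → ℝ) : Prop :=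
  (Function.support x).Finite ∧ (∀ p, 0 ≤ x p) ∧
  (∀ p, x p ≠ 0 → ∀ i, 0 ≤ p.2 i ∧ p.2 i ≤ 1) ∧ (∀ r, (∑ᶠ s, x (r, s)) = g r)

/-- Calibration: the posterior mean of `rᵢ` given any signal value `c` of bidder `i`
equals `c`. -/
def CalibratedN {n : ℕ} (x : (Fin n → ℝ) × (Fin n → ℝ) → ℝ) : Prop :=
  ∀ i : Fin n, ∀ c : ℝ, 0 ≤ c → c ≤ 1 →
    (∑ᶠ p : (Fin n → ℝ) × (Fin n → ℝ), if p.2 i = c then x p * (p.1 i - c) else 0) = 0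

/-- The maximal value-weighted signal `max_j v_j s_j`. -/
def maxScore {n : ℕ} (v s : Fin n → ℝ) : ℝ := ⨆ i, v i * s i

/-- The set of winners `W(s) = {i : v_i s_i = max_j v_j s_j}`. -/
def winners {n : ℕ} (v s : Fin n → ℝ) : Finset (Fin n) :=
  Finset.univ.filter fun i => v i * s i = maxScore v s

/-- The highest competing value-weighted signal `max_{j ≠ i} v_j s_j`. -/
def maxOther {n : ℕ} (v s : Fin n → ℝ) (i : Fin n) : ℝ :=
  ⨆ j : {j : Fin n // j ≠ i}, v j.1 * s j.1

/-- Expected revenue of the click-through auction with uniform tie-breaking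
(division by zero is zero in Lean, matching the convention t/0 = 0). -/
def RevN {n : ℕ} (v : Fin n → ℝ) (x : (Fin n → ℝ) × (Fin n → ℝ) → ℝ) : ℝ :=
  ∑ᶠ p : (Fin n → ℝ) × (Fin n → ℝ), x p *
    (((winners v p.2).card : ℝ)⁻¹ *
      ∑ i ∈ winners v p.2, p.1 i * (maxOther v p.2 i / p.2 i))

/-- The product prior on three bidders: each CTR is independently 0 w.p. 2/3 and
1 w.p. 1/3. -/
def gThree : (Fin 3 → ℝ) → ℝ := fun r =>
  ∏ i : Fin 3, (if r i = 0 then (2:ℝ)/3 else if r i = 1 then 1/3 else 0)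

/-- Per-bidder signalling kernel: joint probability of CTR value `a` and signal
value `c`. -/
def kernelThree (a c : ℝ) : ℝ :=
  if a = 0 ∧ c = 0 then 1/4
  else if a = 0 ∧ c = 4/9 then 5/12
  else if a = 1 ∧ c = 4/9 then 1/3
  else 0

/-- The product information structure built from the per-bidder kernel. -/
def xThree : (Fin 3 → ℝ) × (Fin 3 → ℝ) → ℝ := fun p =>
  ∏ i : Fin 3, kernelThree (p.1 i) (p.2 i)

/-- Full disclosure: the signal equals the CTR vector. -/
def xThreeFull : (Fin 3 → ℝ) × (Fin 3 → ℝ) → ℝ := fun p =>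
  if p.2 = p.1 then gThree p.1 else 0

/-- No disclosure: the signal is the constant expected CTR vector (1/3,1/3,1/3). -/
def xThreeNo : (Fin 3 → ℝ) × (Fin 3 → ℝ) → ℝ := fun p =>
  if p.2 = (fun _ => (1:ℝ)/3) then gThree p.1 else 0

/-! ### Auxiliary machinery -/


lemma aux_ciSup_fin3 (f : Fin 3 → ℝ) : (⨆ i, f i) = max (f 0) (max (f 1) (f 2)) := by
  apply le_antisymm
  · refine ciSup_le fun i => ?_
    fin_cases i
    · exact le_max_left _ _
    · exact (le_max_left _ _).trans (le_max_right _ _)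
    · exact (le_max_right _ _).trans (le_max_right _ _)
  · have hb : BddAbove (Set.range f) := Set.Finite.bddAbove (Set.finite_range f)
    exact max_le (le_ciSup hb 0) (max_le (le_ciSup hb 1) (le_ciSup hb 2))

lemma aux_maxScore (s : Fin 3 → ℝ) :
    maxScore (fun _ : Fin 3 => (1:ℝ)) s = max (s 0) (max (s 1) (s 2)) := by
  unfold maxScore; rw [aux_ciSup_fin3]; simp

lemma aux_ciSup_ne (f : Fin 3 → ℝ) (i a b : Fin 3) (ha : a ≠ i) (hb : b ≠ i)
    (hcov : ∀ j : Fin 3, j ≠ i → j = a ∨ j = b) :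
    (⨆ j : {j : Fin 3 // j ≠ i}, f j.1) = max (f a) (f b) := by
  have : Nonempty {j : Fin 3 // j ≠ i} := ⟨⟨a, ha⟩⟩
  apply le_antisymm
  · refine ciSup_le fun j => ?_
    rcases hcov j.1 j.2 with h | h
    · rw [h]; exact le_max_left _ _
    · rw [h]; exact le_max_right _ _
  · have hb' : BddAbove (Set.range fun j : {j : Fin 3 // j ≠ i} => f j.1) :=
      Set.Finite.bddAbove (Set.finite_range _)
    exact max_le (le_ciSup hb' ⟨a, ha⟩) (le_ciSup hb' ⟨b, hb⟩)

lemma aux_maxOther0 (s : Fin 3 → ℝ) :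
    maxOther (fun _ : Fin 3 => (1:ℝ)) s 0 = max (s 1) (s 2) := by
  unfold maxOther
  have := aux_ciSup_ne (fun j => (1:ℝ) * s j) 0 1 2 (by decide) (by decide) (by decide)
  simpa using this

lemma aux_maxOther1 (s : Fin 3 → ℝ) :
    maxOther (fun _ : Fin 3 => (1:ℝ)) s 1 = max (s 0) (s 2) := by
  unfold maxOther
  have := aux_ciSup_ne (fun j => (1:ℝ) * s j) 1 0 2 (by decide) (by decide) (by decide)
  simpa using this

lemma aux_maxOther2 (s : Fin 3 → ℝ) :
    maxOther (fun _ : Fin 3 => (1:ℝ)) s 2 = max (s 0) (s 1) := by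
  unfold maxOther
  have := aux_ciSup_ne (fun j => (1:ℝ) * s j) 2 0 1 (by decide) (by decide) (by decide)
  simpa using this

/-- The tie-broken payoff factor. -/
def pay (s r : Fin 3 → ℝ) : ℝ :=
  ((winners (fun _ : Fin 3 => (1:ℝ)) s).card : ℝ)⁻¹ *
    ∑ i ∈ winners (fun _ : Fin 3 => (1:ℝ)) s, r i * (maxOther (fun _ : Fin 3 => (1:ℝ)) s i / s i)

lemma aux_RevN_eq (x : (Fin 3 → ℝ) × (Fin 3 → ℝ) → ℝ) :
    RevN (fun _ : Fin 3 => (1:ℝ)) x = ∑ᶠ p, x p * pay p.2 p.1 := rfl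

lemma aux_winners_eval (s : Fin 3 → ℝ) (t : Finset (Fin 3))
    (h0 : ((0:Fin 3) ∈ t ↔ s 0 = max (s 0) (max (s 1) (s 2))))
    (h1 : ((1:Fin 3) ∈ t ↔ s 1 = max (s 0) (max (s 1) (s 2))))
    (h2 : ((2:Fin 3) ∈ t ↔ s 2 = max (s 0) (max (s 1) (s 2)))) :
    winners (fun _ : Fin 3 => (1:ℝ)) s = t := by
  ext i
  fin_cases i <;> simp [winners, aux_maxScore, h0, h1, h2]

section payLemmas
variable {t : ℝ} (r : Fin 3 → ℝ)

lemma pay_000 : pay ![0,0,0] r = 0 := by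
  have hw : winners (fun _ : Fin 3 => (1:ℝ)) ![0,0,0] = {0,1,2} := by
    apply aux_winners_eval <;> simp
  rw [pay, hw, Finset.sum_insert (by decide), Finset.sum_insert (by decide),
    Finset.sum_singleton, aux_maxOther0, aux_maxOther1, aux_maxOther2]
  norm_num

lemma pay_t00 (ht : 0 < t) : pay ![t,0,0] r = 0 := by
  have hw : winners (fun _ : Fin 3 => (1:ℝ)) ![t,0,0] = {0} := by
    apply aux_winners_eval <;> simp [max_eq_left ht.le, ht.ne, ht.ne']
  rw [pay, hw, Finset.sum_singleton, aux_maxOther0]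
  norm_num [Matrix.cons_val_two, Matrix.tail_cons, Matrix.head_cons]

lemma pay_0t0 (ht : 0 < t) : pay ![0,t,0] r = 0 := by
  have hw : winners (fun _ : Fin 3 => (1:ℝ)) ![0,t,0] = {1} := by
    apply aux_winners_eval <;> simp [max_eq_left ht.le, max_eq_right ht.le, ht.ne, ht.ne']
  rw [pay, hw, Finset.sum_singleton, aux_maxOther1]
  norm_num [Matrix.cons_val_two, Matrix.tail_cons, Matrix.head_cons]

lemma pay_00t (ht : 0 < t) : pay ![0,0,t] r = 0 := by
  have hw : winners (fun _ : Fin 3 => (1:ℝ)) ![0,0,t] = {2} := by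
    apply aux_winners_eval <;> simp [max_eq_right ht.le, ht.ne, ht.ne']
  rw [pay, hw, Finset.sum_singleton, aux_maxOther2]
  norm_num

lemma pay_tt0 (ht : 0 < t) : pay ![t,t,0] r = (r 0 + r 1)/2 := by
  have hw : winners (fun _ : Fin 3 => (1:ℝ)) ![t,t,0] = {0,1} := by
    apply aux_winners_eval <;>
      simp [max_eq_left ht.le, max_self, ht.ne, ht.ne']
  rw [pay, hw, Finset.sum_insert (by decide), Finset.sum_singleton,
    aux_maxOther0, aux_maxOther1, show ({0,1} : Finset (Fin 3)).card = 2 by decide]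
  simp [max_eq_left ht.le, div_self ht.ne']
  ring

lemma pay_t0t (ht : 0 < t) : pay ![t,0,t] r = (r 0 + r 2)/2 := by
  have hw : winners (fun _ : Fin 3 => (1:ℝ)) ![t,0,t] = {0,2} := by
    apply aux_winners_eval <;>
      simp [max_eq_left ht.le, max_eq_right ht.le, max_self, ht.ne, ht.ne']
  rw [pay, hw, Finset.sum_insert (by decide), Finset.sum_singleton,
    aux_maxOther0, aux_maxOther2, show ({0,2} : Finset (Fin 3)).card = 2 by decide]
  simp [max_eq_left ht.le, max_eq_right ht.le, div_self ht.ne']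
  ring

lemma pay_0tt (ht : 0 < t) : pay ![0,t,t] r = (r 1 + r 2)/2 := by
  have hw : winners (fun _ : Fin 3 => (1:ℝ)) ![0,t,t] = {1,2} := by
    apply aux_winners_eval <;>
      simp [max_eq_right ht.le, max_self, ht.ne, ht.ne']
  rw [pay, hw, Finset.sum_insert (by decide), Finset.sum_singleton,
    aux_maxOther1, aux_maxOther2, show ({1,2} : Finset (Fin 3)).card = 2 by decide]
  simp [max_eq_right ht.le, max_self, div_self ht.ne']
  ring

lemma pay_ttt (ht : 0 < t) : pay ![t,t,t] r = (r 0 + r 1 + r 2)/3 := by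
  have hw : winners (fun _ : Fin 3 => (1:ℝ)) ![t,t,t] = {0,1,2} := by
    apply aux_winners_eval <;> simp [max_self]
  rw [pay, hw, Finset.sum_insert (by decide), Finset.sum_insert (by decide),
    Finset.sum_singleton, aux_maxOther0, aux_maxOther1, aux_maxOther2,
    show ({0,1,2} : Finset (Fin 3)).card = 3 by decide]
  simp [max_self, div_self ht.ne']
  ring

lemma pay_noDisc : pay (fun _ => (1:ℝ)/3) r = (r 0 + r 1 + r 2)/3 := by
  have hw : winners (fun _ : Fin 3 => (1:ℝ)) (fun _ => (1:ℝ)/3) = {0,1,2} := by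
    apply aux_winners_eval <;> simp [max_self]
  rw [pay, hw, Finset.sum_insert (by decide), Finset.sum_insert (by decide),
    Finset.sum_singleton, aux_maxOther0, aux_maxOther1, aux_maxOther2,
    show ({0,1,2} : Finset (Fin 3)).card = 3 by decide]
  norm_num
  ring

end payLemmas

/-! ### Encodings -/

lemma aux_finsum_image {α β : Type*} [Fintype β] (enc : β → α) (hinj : Function.Injective enc)
    (f : α → ℝ) (hsupp : ∀ a, f a ≠ 0 → ∃ b, enc b = a) :
    (∑ᶠ a, f a) = ∑ b : β, f (enc b) := by
  rw [finsum_eq_sum_of_support_subset f (s := Finset.univ.image enc)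
    (by intro a ha
        simp only [Finset.coe_image, Set.mem_image]
        obtain ⟨b, hb⟩ := hsupp a ha
        exact ⟨b, by simp, hb⟩)]
  rw [Finset.sum_image (fun x _ y _ h => hinj h)]

def er (b : Bool) : ℝ := if b then 1 else 0
def es (b : Bool) : ℝ := if b then 4/9 else 0
def vec (f : Bool → ℝ) (b : Bool × Bool × Bool) : Fin 3 → ℝ := ![f b.1, f b.2.1, f b.2.2]

lemma aux_vec_inj {f : Bool → ℝ} (hf : Function.Injective f) :
    Function.Injective (vec f) := by
  intro b b' h
  have h0 := congrFun h 0
  have h1 := congrFun h 1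
  have h2 := congrFun h 2
  simp [vec] at h0 h1 h2
  exact Prod.ext (hf h0) (Prod.ext (hf h1) (hf h2))

lemma er_inj : Function.Injective er := by
  intro a b h; cases a <;> cases b <;> simp_all [er]

lemma es_inj : Function.Injective es := by
  intro a b h; cases a <;> cases b <;> simp_all [es] <;> norm_num at h

lemma aux_vec_round_er (g : Fin 3 → ℝ) (hg : ∀ i, g i = 0 ∨ g i = 1) :
    ∃ b, vec er b = g := by
  refine ⟨(if g 0 = 1 then true else false, if g 1 = 1 then true else false,
    if g 2 = 1 then true else false), ?_⟩
  have key : ∀ a : ℝ, a = 0 ∨ a = 1 → er (if a = 1 then true else false) = a := by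
    rintro a (rfl | rfl) <;> norm_num [er]
  funext i
  fin_cases i <;> simpa [vec] using key _ (hg _)

lemma aux_vec_round_es (g : Fin 3 → ℝ) (hg : ∀ i, g i = 0 ∨ g i = 4/9) :
    ∃ b, vec es b = g := by
  refine ⟨(if g 0 = 4/9 then true else false, if g 1 = 4/9 then true else false,
    if g 2 = 4/9 then true else false), ?_⟩
  have key : ∀ a : ℝ, a = 0 ∨ a = 4/9 → es (if a = 4/9 then true else false) = a := by
    rintro a (rfl | rfl) <;> norm_num [es]
  funext i
  fin_cases i <;> simpa [vec] using key _ (hg _)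

/-- kernel values -/
lemma k00 : kernelThree 0 0 = 1/4 := by norm_num [kernelThree]
lemma k04 : kernelThree 0 (4/9) = 5/12 := by norm_num [kernelThree]
lemma k10 : kernelThree 1 0 = 0 := by norm_num [kernelThree]
lemma k14 : kernelThree 1 (4/9) = 1/3 := by norm_num [kernelThree]

lemma kernel_cases {a c : ℝ} (h : kernelThree a c ≠ 0) :
    (a = 0 ∧ c = 0) ∨ (a = 0 ∧ c = 4/9) ∨ (a = 1 ∧ c = 4/9) := by
  unfold kernelThree at h
  split_ifs at h with h1 h2 h3
  · exact Or.inl h1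
  · exact Or.inr (Or.inl h2)
  · exact Or.inr (Or.inr h3)
  · exact absurd rfl h

lemma kernel_nonneg (a c : ℝ) : 0 ≤ kernelThree a c := by
  unfold kernelThree; split_ifs <;> norm_num

lemma xThree_factor_ne {p : (Fin 3 → ℝ) × (Fin 3 → ℝ)} (h : xThree p ≠ 0) (i : Fin 3) :
    kernelThree (p.1 i) (p.2 i) ≠ 0 := by
  unfold xThree at h
  exact Finset.prod_ne_zero_iff.mp h i (Finset.mem_univ i)

def encX (q : (Bool × Bool × Bool) × (Bool × Bool × Bool)) :
    (Fin 3 → ℝ) × (Fin 3 → ℝ) := (vec er q.1, vec es q.2)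

lemma encX_inj : Function.Injective encX := by
  intro q q' h
  have h1 : vec er q.1 = vec er q'.1 := congrArg Prod.fst h
  have h2 : vec es q.2 = vec es q'.2 := congrArg Prod.snd h
  exact Prod.ext (aux_vec_inj er_inj h1) (aux_vec_inj es_inj h2)

lemma xThree_supp {p : (Fin 3 → ℝ) × (Fin 3 → ℝ)} (h : xThree p ≠ 0) :
    ∃ q, encX q = p := by
  have h1 : ∀ i, p.1 i = 0 ∨ p.1 i = 1 := fun i => by
    rcases kernel_cases (xThree_factor_ne h i) with ⟨ha, _⟩ | ⟨ha, _⟩ | ⟨ha, _⟩ <;>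
      [exact Or.inl ha; exact Or.inl ha; exact Or.inr ha]
  have h2 : ∀ i, p.2 i = 0 ∨ p.2 i = 4/9 := fun i => by
    rcases kernel_cases (xThree_factor_ne h i) with ⟨_, hc⟩ | ⟨_, hc⟩ | ⟨_, hc⟩ <;>
      [exact Or.inl hc; exact Or.inr hc; exact Or.inr hc]
  obtain ⟨b1, hb1⟩ := aux_vec_round_er p.1 h1
  obtain ⟨b2, hb2⟩ := aux_vec_round_es p.2 h2
  exact ⟨(b1, b2), Prod.ext hb1 hb2⟩

lemma gThree_cases {r : Fin 3 → ℝ} (h : gThree r ≠ 0) (i : Fin 3) : r i = 0 ∨ r i = 1 := by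
  unfold gThree at h
  have := Finset.prod_ne_zero_iff.mp h i (Finset.mem_univ i)
  by_cases h0 : r i = 0
  · exact Or.inl h0
  by_cases h1 : r i = 1
  · exact Or.inr h1
  simp [h0, h1] at this

lemma hG (a : ℝ) : kernelThree a 0 + kernelThree a (4/9) =
    (if a = 0 then (2:ℝ)/3 else if a = 1 then 1/3 else 0) := by
  by_cases h0 : a = 0
  · subst h0; norm_num [kernelThree]
  by_cases h1 : a = 1
  · subst h1; norm_num [kernelThree]
  simp [kernelThree, h0, h1]

def encF (b : Bool × Bool × Bool) : (Fin 3 → ℝ) × (Fin 3 → ℝ) := (vec er b, vec er b)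

lemma encF_inj : Function.Injective encF := fun b b' h =>
  aux_vec_inj er_inj (congrArg Prod.fst h)

lemma xThreeFull_supp {p : (Fin 3 → ℝ) × (Fin 3 → ℝ)} (h : xThreeFull p ≠ 0) :
    ∃ b, encF b = p := by
  unfold xThreeFull at h
  split_ifs at h with hs
  · obtain ⟨b, hb⟩ := aux_vec_round_er p.1 (gThree_cases h)
    exact ⟨b, Prod.ext hb (hs ▸ hb)⟩
  · exact absurd rfl h

def encN (b : Bool × Bool × Bool) : (Fin 3 → ℝ) × (Fin 3 → ℝ) :=
  (vec er b, fun _ => (1:ℝ)/3)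

lemma encN_inj : Function.Injective encN := fun b b' h =>
  aux_vec_inj er_inj (congrArg Prod.fst h)

lemma xThreeNo_supp {p : (Fin 3 → ℝ) × (Fin 3 → ℝ)} (h : xThreeNo p ≠ 0) :
    ∃ b, encN b = p := by
  unfold xThreeNo at h
  split_ifs at h with hs
  · obtain ⟨b, hb⟩ := aux_vec_round_er p.1 (gThree_cases h)
    exact ⟨b, Prod.ext hb hs.symm⟩
  · exact absurd rfl h

lemma aux_info : IsInfoN gThree xThree := by
  refine ⟨?_, ?_, ?_, ?_⟩
  · refine Set.Finite.subset (Finset.finite_toSet (Finset.univ.image encX)) ?_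
    intro p hp
    obtain ⟨q, hq⟩ := xThree_supp hp
    simp only [Finset.coe_image, Set.mem_image, Finset.mem_coe]
    exact ⟨q, by simp, hq⟩
  · intro p
    exact Finset.prod_nonneg fun i _ => kernel_nonneg _ _
  · intro p hp i
    rcases kernel_cases (xThree_factor_ne hp i) with ⟨_, hc⟩ | ⟨_, hc⟩ | ⟨_, hc⟩ <;>
      rw [hc] <;> norm_num
  · intro r
    rw [aux_finsum_image (vec es) (aux_vec_inj es_inj) _ (fun s hs => by
      have h2 : ∀ i, s i = 0 ∨ s i = 4/9 := fun i => by
        rcases kernel_cases (xThree_factor_ne (p := (r, s)) hs i) with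
          ⟨_, hc⟩ | ⟨_, hc⟩ | ⟨_, hc⟩ <;> [exact Or.inl hc; exact Or.inr hc; exact Or.inr hc]
      exact aux_vec_round_es s h2)]
    simp only [Fintype.sum_prod_type, Fintype.sum_bool]
    simp only [xThree, Fin.prod_univ_three, vec, es, if_true, Bool.false_eq_true, if_false]
    simp only [Matrix.cons_val_zero, Matrix.cons_val_one, Matrix.head_cons,
      show ∀ a b c : ℝ, ![a,b,c] 2 = c from fun a b c => by simp]
    simp only [gThree, Fin.prod_univ_three]
    rw [← hG (r 0), ← hG (r 1), ← hG (r 2)]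
    ring
lemma aux_cal : CalibratedN xThree := by
  intro i c _ _
  rw [aux_finsum_image encX encX_inj _ (fun p hp => xThree_supp (fun hx => hp (by
    simp only [hx, zero_mul, ite_self])))]
  have e2 : ∀ a b c' : ℝ, ![a,b,c'] 2 = c' := fun a b c' => by simp
  fin_cases i <;>
  · simp only [Fintype.sum_prod_type, Fintype.sum_bool, encX]
    simp only [vec, er, es, if_true, Bool.false_eq_true, if_false, Fin.mk_zero, Fin.mk_one,
      Fin.isValue, show (⟨2, by norm_num⟩ : Fin 3) = 2 from rfl]
    simp only [Matrix.cons_val_zero, Matrix.cons_val_one, Matrix.head_cons, e2]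
    simp only [xThree, Fin.prod_univ_three, vec,
      Matrix.cons_val_zero, Matrix.cons_val_one, Matrix.head_cons, e2]
    rcases eq_or_ne c 0 with rfl | hc0
    · norm_num [k00, k04, k10, k14]
    rcases eq_or_ne c (4/9) with rfl | hc49
    · norm_num [k00, k04, k10, k14] <;> ring
    · simp only [eq_false (Ne.symm hc0), eq_false (Ne.symm hc49), if_false, add_zero]
lemma aux_rev_partial : RevN (fun _ : Fin 3 => (1:ℝ)) xThree = 3/8 := by
  have h49 : (0:ℝ) < 4/9 := by norm_num
  rw [aux_RevN_eq]
  rw [aux_finsum_image encX encX_inj _ (fun p hp => xThree_supp (left_ne_zero_of_mul hp))]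
  simp only [Fintype.sum_prod_type, Fintype.sum_bool, encX]
  simp only [vec, er, es, if_true, Bool.false_eq_true, if_false]
  simp only [pay_000, pay_t00 _ h49, pay_0t0 _ h49, pay_00t _ h49, pay_tt0 _ h49,
    pay_t0t _ h49, pay_0tt _ h49, pay_ttt _ h49]
  simp only [xThree, Fin.prod_univ_three]
  norm_num [k00, k04, k10, k14, Matrix.cons_val_two, Matrix.tail_cons, Matrix.head_cons]
lemma aux_rev_full : RevN (fun _ : Fin 3 => (1:ℝ)) xThreeFull = 7/27 := by
  have h1 : (0:ℝ) < 1 := one_pos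
  rw [aux_RevN_eq]
  rw [aux_finsum_image encF encF_inj _ (fun p hp => xThreeFull_supp (left_ne_zero_of_mul hp))]
  simp only [Fintype.sum_prod_type, Fintype.sum_bool, encF]
  simp only [vec, er, if_true, Bool.false_eq_true, if_false]
  simp only [pay_000, pay_t00 _ h1, pay_0t0 _ h1, pay_00t _ h1, pay_tt0 _ h1,
    pay_t0t _ h1, pay_0tt _ h1, pay_ttt _ h1]
  simp only [xThreeFull, if_pos rfl]
  simp only [gThree, Fin.prod_univ_three]
  norm_num [Matrix.cons_val_two, Matrix.tail_cons, Matrix.head_cons]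
lemma aux_rev_no : RevN (fun _ : Fin 3 => (1:ℝ)) xThreeNo = 1/3 := by
  rw [aux_RevN_eq]
  rw [aux_finsum_image encN encN_inj _ (fun p hp => xThreeNo_supp (left_ne_zero_of_mul hp))]
  simp only [Fintype.sum_prod_type, Fintype.sum_bool, encN]
  simp only [vec, er, if_true, Bool.false_eq_true, if_false]
  simp only [pay_noDisc]
  simp only [xThreeNo, if_pos rfl]
  simp only [gThree, Fin.prod_univ_three]
  norm_num [Matrix.cons_val_two, Matrix.tail_cons, Matrix.head_cons]

/-- with three bidders, the displayed independent partially-bundled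
structure is calibrated with revenue 3/8, strictly beating full disclosure
(7/27) and no disclosure (1/3). -/
theorem three_bidder_partial_disclosure_beats_extremes :
    IsInfoN gThree xThree ∧ CalibratedN xThree ∧
    RevN (fun _ : Fin 3 => (1:ℝ)) xThree = 3/8 ∧
    RevN (fun _ : Fin 3 => (1:ℝ)) xThreeFull = 7/27 ∧
    RevN (fun _ : Fin 3 => (1:ℝ)) xThreeNo = 1/3 ∧
    (7:ℝ)/27 < 3/8 ∧ (1:ℝ)/3 < 3/8 := by
  exact ⟨aux_info, aux_cal, aux_rev_partial, aux_rev_full, aux_rev_no,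
    by norm_num, by norm_num⟩
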